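/- For positive invertible operators A and B on a Hilbert space, the parallel sum A:B = (A^{-1} + B^{-1})^{-1} satisfies A:B ≤ t²·A + (1-t)²·B for every real number t. -/

import Mathlib

/-- For positive invertible operators `A` and `B` on a complex Hilbert space, the
parallel sum `A : B = (A⁻¹ + B⁻¹)⁻¹` (here given via two-sided inverses `A'`, `B'`
of `A`, `B` and a two-sided inverse `S` of `A' + B'`) satisfies
`A : B ≤ t² • A + (1 - t)² • B` for every real `t`, in the Loewner order. -/
theorem parallel_sum_le_sq_combination
    (E : Type*) [NormedAddCommGroup E] [InnerProductSpace ℂ E] [CompleteSpace E]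
    (A B A' B' S : E →L[ℂ] E)
    (hA : A.IsPositive) (hB : B.IsPositive)
    (hAA' : A * A' = 1) (hA'A : A' * A = 1)
    (hBB' : B * B' = 1) (hB'B : B' * B = 1)
    (hS : S * (A' + B') = 1) (hS' : (A' + B') * S = 1) :
    ∀ t : ℝ, (t ^ 2 • A + (1 - t) ^ 2 • B - S).IsPositive := by
  intro t
  obtain ⟨hAsa, hApos⟩ := ContinuousLinearMap.isPositive_def'.mp hA
  obtain ⟨hBsa, hBpos⟩ := ContinuousLinearMap.isPositive_def'.mp hB
  -- T := B' * (S * A') is a two-sided inverse of A + B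
  have hT1 : (A + B) * (B' * (S * A')) = 1 := by
    have h1 : (A + B) * B' = A * (A' + B') := by
      rw [add_mul, hBB', mul_add, hAA', add_comm]
    calc (A + B) * (B' * (S * A')) = ((A + B) * B') * (S * A') := (mul_assoc _ _ _).symm
      _ = (A * (A' + B')) * (S * A') := by rw [h1]
      _ = A * ((A' + B') * (S * A')) := mul_assoc _ _ _
      _ = A * (((A' + B') * S) * A') := by rw [mul_assoc (A' + B') S A']
      _ = A * A' := by rw [hS', one_mul]
      _ = 1 := hAA'
  have hT2 : (B' * (S * A')) * (A + B) = 1 := by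
    have h1 : A' * (A + B) = (A' + B') * B := by
      rw [mul_add, hA'A, add_mul, hB'B, add_comm]
    calc (B' * (S * A')) * (A + B) = B' * ((S * A') * (A + B)) := mul_assoc _ _ _
      _ = B' * (S * (A' * (A + B))) := by rw [mul_assoc S A' (A + B)]
      _ = B' * (S * ((A' + B') * B)) := by rw [h1]
      _ = B' * ((S * (A' + B')) * B) := by rw [mul_assoc S (A' + B') B]
      _ = B' * B := by rw [hS, one_mul]
      _ = 1 := hB'B
  set T : E →L[ℂ] E := B' * (S * A') with hTdef
  -- T is self-adjoint
  have hABsa : IsSelfAdjoint (A + B) := hAsa.add hBsa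
  have hTsa : IsSelfAdjoint T := by
    have h1 : star T * (A + B) = 1 := by
      have := congrArg star hT1
      simpa [star_mul, hABsa.star_eq] using this
    calc star T = star T * ((A + B) * T) := by rw [hT1, mul_one]
      _ = (star T * (A + B)) * T := (mul_assoc _ _ _).symm
      _ = T := by rw [h1, one_mul]
  -- T is positive
  have hABpos : (A + B).IsPositive := ContinuousLinearMap.isPositive_def'.mpr ⟨hABsa, fun x => by
    rw [ContinuousLinearMap.reApplyInnerSelf, ContinuousLinearMap.add_apply, inner_add_left,
      map_add]
    exact add_nonneg (hApos x) (hBpos x)⟩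
  have hTpos : T.IsPositive := by
    refine ContinuousLinearMap.isPositive_def'.mpr ⟨hTsa, fun x => ?_⟩
    have hx : (A + B) (T x) = x := by
      have := congrArg (fun f : E →L[ℂ] E => f x) hT1
      simpa using this
    rw [ContinuousLinearMap.reApplyInnerSelf]
    calc (0 : ℝ) ≤ RCLike.re (inner ℂ ((A + B) (T x)) (T x)) :=
          hABpos.re_inner_nonneg_left (T x)
      _ = RCLike.re (inner ℂ (T x) ((A + B) (T x))) := inner_re_symm _ _
      _ = RCLike.re (inner ℂ (T x) x) := by rw [hx]
  -- uniqueness of the inverse of A' + B'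
  have uniq : ∀ X : E →L[ℂ] E, (A' + B') * X = 1 → X = S := by
    intro X hX
    calc X = (S * (A' + B')) * X := by rw [hS, one_mul]
      _ = S * ((A' + B') * X) := mul_assoc _ _ _
      _ = S := by rw [hX, mul_one]
  -- products
  have hATB : A * (T * B) = S := by
    refine uniq _ ?_
    have h2 : (A' + B') * A = B' * (A + B) := by
      rw [add_mul, hA'A, mul_add, hB'B, add_comm]
    calc (A' + B') * (A * (T * B)) = ((A' + B') * A) * (T * B) := (mul_assoc _ _ _).symm
      _ = (B' * (A + B)) * (T * B) := by rw [h2]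
      _ = B' * ((A + B) * (T * B)) := mul_assoc _ _ _
      _ = B' * (((A + B) * T) * B) := by rw [mul_assoc (A + B) T B]
      _ = B' * B := by rw [hT1, one_mul]
      _ = 1 := hB'B
  have hBTA : B * (T * A) = S := by
    refine uniq _ ?_
    have h2 : (A' + B') * B = A' * (A + B) := by
      rw [add_mul, hB'B, mul_add, hA'A, add_comm]
    calc (A' + B') * (B * (T * A)) = ((A' + B') * B) * (T * A) := (mul_assoc _ _ _).symm
      _ = (A' * (A + B)) * (T * A) := by rw [h2]
      _ = A' * ((A + B) * (T * A)) := mul_assoc _ _ _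
      _ = A' * (((A + B) * T) * A) := by rw [mul_assoc (A + B) T A]
      _ = A' * A := by rw [hT1, one_mul]
      _ = 1 := hA'A
  have hATA : A * (T * A) = A - S := by
    have h1 : A * (T * (A + B)) = A := by rw [hT2, mul_one]
    rw [mul_add, mul_add, hATB] at h1
    exact eq_sub_of_add_eq h1
  have hBTB : B * (T * B) = B - S := by
    have h1 : B * (T * (A + B)) = B := by rw [hT2, mul_one]
    rw [mul_add, mul_add, hBTA, add_comm] at h1
    exact eq_sub_of_add_eq h1
  -- the self-adjoint operator C
  have hCsa : IsSelfAdjoint ((t : ℂ) • A - (1 - (t : ℂ)) • B) := by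
    refine IsSelfAdjoint.sub ?_ ?_
    · rw [IsSelfAdjoint, star_smul, hAsa.star_eq, Complex.star_def, Complex.conj_ofReal]
    · rw [IsSelfAdjoint, star_smul, hBsa.star_eq]
      congr 1
      rw [Complex.star_def, map_sub, map_one, Complex.conj_ofReal]
  -- the algebraic identity
  have hgoal : t ^ 2 • A + (1 - t) ^ 2 • B - S
      = ((t : ℂ) • A - (1 - (t : ℂ)) • B) * (T * ((t : ℂ) • A - (1 - (t : ℂ)) • B)) := by
    have hs1 : t ^ 2 • A = ((t : ℂ) ^ 2) • A := by
      rw [← Complex.coe_smul]; norm_cast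
    have hs2 : (1 - t) ^ 2 • B = ((1 - (t : ℂ)) ^ 2) • B := by
      rw [← Complex.coe_smul]; push_cast; ring_nf
    rw [hs1, hs2]
    have expand : ((t : ℂ) • A - (1 - (t : ℂ)) • B) * (T * ((t : ℂ) • A - (1 - (t : ℂ)) • B))
        = ((t : ℂ) * (t : ℂ)) • (A * (T * A))
          - ((t : ℂ) * (1 - (t : ℂ))) • (A * (T * B))
          - ((1 - (t : ℂ)) * (t : ℂ)) • (B * (T * A))
          + ((1 - (t : ℂ)) * (1 - (t : ℂ))) • (B * (T * B)) := by
      simp only [mul_sub, sub_mul, smul_mul_assoc, mul_smul_comm, smul_smul]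
      module
    rw [expand, hATA, hATB, hBTA, hBTB]
    simp only [smul_sub]
    have hc : ((t : ℂ) * (t : ℂ)) + ((t : ℂ) * (1 - (t : ℂ))) + ((1 - (t : ℂ)) * (t : ℂ))
        + ((1 - (t : ℂ)) * (1 - (t : ℂ))) = 1 := by ring
    match_scalars <;> ring
  rw [hgoal]
  have := hTpos.conj_adjoint ((t : ℂ) • A - (1 - (t : ℂ)) • B)
  rw [hCsa.adjoint_eq] at this
  exact this
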